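/- The supremal conditionally controllable sublanguage exists and equals the union of all conditionally controllable sublanguages: given generators G₁, G₂, G_k over E₁, E₂, E_k, uncontrollable alphabets E_{1,u}, E_{2,u}, E_{k,u}, and a family (K_i)_{i∈I} of sublanguages of K ⊆ L(G₁∥G₂∥G_k), each conditionally controllable for G₁, G₂, G_k, the union ∪_{i∈I} K_i is conditionally controllable for G₁, G₂, G_k. -/
import Mathlib


open scoped Classical

/-- Natural projection: erase letters not in `A`. -/
noncomputable def proj {Ev : Type*} (A : Set Ev) (w : List Ev) : List Ev :=
  w.filter (fun a => decide (a ∈ A))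

/-- Projection of a language. -/
noncomputable def projL {Ev : Type*} (A : Set Ev) (L : Set (List Ev)) : Set (List Ev) :=
  proj A '' L

/-- Words over an alphabet `A`, i.e., `A*`. -/
def star {Ev : Type*} (A : Set Ev) : Set (List Ev) := {w | ∀ a ∈ w, a ∈ A}

/-- Synchronous product of `L₁ ⊆ A*` and `L₂ ⊆ B*`. -/
noncomputable def sync {Ev : Type*} (A B : Set Ev) (L1 L2 : Set (List Ev)) :
    Set (List Ev) :=
  {w | w ∈ star (A ∪ B) ∧ proj A w ∈ L1 ∧ proj B w ∈ L2}

/-- Prefix closure of a language. -/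
def prefixCl {Ev : Type*} (L : Set (List Ev)) : Set (List Ev) := {w | ∃ v, w ++ v ∈ L}

/-- Controllability of `K` with respect to (prefix-closed) `L` and uncontrollable events `Eu`. -/
def controllable {Ev : Type*} (K L : Set (List Ev)) (Eu : Set Ev) : Prop :=
  ∀ s ∈ prefixCl K, ∀ u ∈ Eu, s ++ [u] ∈ L → s ++ [u] ∈ prefixCl K

/-- Supremal controllable sublanguage of `K` w.r.t. `N` and `U`. -/
noncomputable def supC {Ev : Type*} (K N : Set (List Ev)) (U : Set Ev) : Set (List Ev) :=
  ⋃₀ {M | M ⊆ K ∧ controllable M N U}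

/-- `proj A` is an `L`-observer. -/
def observer {Ev : Type*} (A : Set Ev) (L : Set (List Ev)) : Prop :=
  ∀ t ∈ projL A L, ∀ s ∈ prefixCl L, proj A s <+: t →
    ∃ u, s ++ u ∈ L ∧ proj A (s ++ u) = t

/-- `proj A` is locally control consistent (LCC) for `L` (w.r.t. uncontrollable events `Eu`). -/
def lcc {Ev : Type*} (A Eu : Set Ev) (L : Set (List Ev)) : Prop :=
  ∀ s ∈ L, ∀ σ ∈ A ∩ Eu, proj A s ++ [σ] ∈ projL A L →
    (∃ u, (∀ a ∈ u, a ∉ A) ∧ s ++ u ++ [σ] ∈ L) →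
    ∃ u, (∀ a ∈ u, a ∈ Eu ∧ a ∉ A) ∧ s ++ u ++ [σ] ∈ L

/-- Conditional controllability of `K` for plants `LG1, LG2, LGk` and uncontrollable
events `Eu`. -/
def condC {Ev : Type*} (E1 E2 Ek Eu : Set Ev) (LG1 LG2 LGk : Set (List Ev))
    (K : Set (List Ev)) : Prop :=
  controllable (projL Ek K) LGk (Ek ∩ Eu) ∧
  controllable (projL (E1 ∪ Ek) K)
    (sync E1 Ek LG1 (prefixCl (projL Ek K))) ((E1 ∪ Ek) ∩ Eu) ∧
  controllable (projL (E2 ∪ Ek) K)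
    (sync E2 Ek LG2 (prefixCl (projL Ek K))) ((E2 ∪ Ek) ∩ Eu)


lemma proj_append {Ev : Type*} (A : Set Ev) (s t : List Ev) :
    proj A (s ++ t) = proj A s ++ proj A t := by
  simp [proj]

lemma proj_proj {Ev : Type*} {A B : Set Ev} (h : B ⊆ A) (w : List Ev) :
    proj B (proj A w) = proj B w := by
  unfold proj
  rw [List.filter_filter]
  congr 1
  funext a
  by_cases hb : a ∈ B
  · simp [hb, h hb]
  · simp [hb]

lemma mem_prefixCl_projL {Ev : Type*} {A B : Set Ev} (h : B ⊆ A) {M : Set (List Ev)}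
    {s : List Ev} (hs : s ∈ prefixCl (projL A M)) :
    proj B s ∈ prefixCl (projL B M) := by
  obtain ⟨v, x, hxM, hx⟩ := hs
  exact ⟨proj B v, x, hxM, by rw [← proj_append, ← hx, proj_proj h]⟩

lemma prefixCl_projL_iUnion {Ev : Type*} (A : Set Ev) {ι : Type*} (Ki : ι → Set (List Ev))
    (s : List Ev) :
    s ∈ prefixCl (projL A (⋃ i, Ki i)) ↔ ∃ i, s ∈ prefixCl (projL A (Ki i)) := by
  constructor
  · rintro ⟨v, x, hx, he⟩
    obtain ⟨i, hxi⟩ := Set.mem_iUnion.mp hx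
    exact ⟨i, v, x, hxi, he⟩
  · rintro ⟨i, v, x, hx, he⟩
    exact ⟨v, x, Set.mem_iUnion.mpr ⟨i, hx⟩, he⟩

lemma auxCtrl {Ev : Type*} (E Ek Eu : Set Ev) (LG LGk : Set (List Ev)) {ι : Type*}
    (Ki : ι → Set (List Ev))
    (hKk : prefixCl (projL Ek (⋃ i, Ki i)) ⊆ LGk)
    (h1 : ∀ i, controllable (projL Ek (Ki i)) LGk (Ek ∩ Eu))
    (h2 : ∀ i, controllable (projL (E ∪ Ek) (Ki i))
      (sync E Ek LG (prefixCl (projL Ek (Ki i)))) ((E ∪ Ek) ∩ Eu)) :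
    controllable (projL (E ∪ Ek) (⋃ i, Ki i))
      (sync E Ek LG (prefixCl (projL Ek (⋃ i, Ki i)))) ((E ∪ Ek) ∩ Eu) := by
  intro s hs u hu hsu
  obtain ⟨i, hsi⟩ := (prefixCl_projL_iUnion (E ∪ Ek) Ki s).mp hs
  obtain ⟨hstar, hE, hEk⟩ := hsu
  have hks : proj Ek s ∈ prefixCl (projL Ek (Ki i)) :=
    mem_prefixCl_projL Set.subset_union_right hsi
  have hclaim : proj Ek (s ++ [u]) ∈ prefixCl (projL Ek (Ki i)) := by
    by_cases hu' : u ∈ Ek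
    · have heq : proj Ek (s ++ [u]) = proj Ek s ++ [u] := by simp [proj, hu']
      rw [heq]
      exact h1 i _ hks u ⟨hu', hu.2⟩ (by rw [← heq]; exact hKk hEk)
    · have heq : proj Ek (s ++ [u]) = proj Ek s := by simp [proj, hu']
      rw [heq]; exact hks
  have := h2 i s hsi u hu ⟨hstar, hE, hclaim⟩
  exact (prefixCl_projL_iUnion (E ∪ Ek) Ki (s ++ [u])).mpr ⟨i, this⟩

/-- the union of conditionally controllable sublanguages is conditionally
controllable; hence the supremal conditionally controllable sublanguage exists. -/
theorem stmt9 {Ev : Type*} (E1 E2 Ek Eu : Set Ev) (LG1 LG2 LGk K : Set (List Ev))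
    (hLG1 : LG1 ⊆ star E1) (hLG2 : LG2 ⊆ star E2) (hLGk : LGk ⊆ star Ek)
    (hLG1c : prefixCl LG1 = LG1) (hLG2c : prefixCl LG2 = LG2) (hLGkc : prefixCl LGk = LGk)
    (hK : K ⊆ sync E1 (E2 ∪ Ek) LG1 (sync E2 Ek LG2 LGk))
    {ι : Type*} (Ki : ι → Set (List Ev))
    (hsub : ∀ i, Ki i ⊆ K)
    (hcc : ∀ i, condC E1 E2 Ek Eu LG1 LG2 LGk (Ki i)) :
    condC E1 E2 Ek Eu LG1 LG2 LGk (⋃ i, Ki i) := by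

  have hKk : prefixCl (projL Ek (⋃ i, Ki i)) ⊆ LGk := by
    rintro w ⟨v, x, hx, he⟩
    obtain ⟨i, hxi⟩ := Set.mem_iUnion.mp hx
    obtain ⟨_, _, h2⟩ := hK (hsub i hxi)
    obtain ⟨_, _, hk⟩ := h2
    rw [proj_proj Set.subset_union_right] at hk
    rw [← hLGkc]
    exact ⟨v, he ▸ hk⟩
  refine ⟨?_, ?_, ?_⟩
  · intro s hs u hu hsu
    obtain ⟨i, hsi⟩ := (prefixCl_projL_iUnion Ek Ki s).mp hs
    exact (prefixCl_projL_iUnion Ek Ki (s ++ [u])).mpr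
      ⟨i, (hcc i).1 s hsi u hu hsu⟩
  · exact auxCtrl E1 Ek Eu LG1 LGk Ki hKk (fun i => (hcc i).1) (fun i => (hcc i).2.1)
  · exact auxCtrl E2 Ek Eu LG2 LGk Ki hKk (fun i => (hcc i).1) (fun i => (hcc i).2.2)
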